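/- Let G be the graph with vertex set V₁ ∪ V₂ ∪ P where V₁ = {x₁,…,x_r}, |V₂| = r, P = {p₁,…,p_{r−1}}, edge set consisting of all edges between V₁ and V₂ together with edges x₁p₁, p₁x₂, x₂p₂, …, x_{r−1}p_{r−1}, p_{r−1}x_r. Then the path x₁ p₁ x₂ p₂ … x_{r−1} p_{r−1} x_r is a chordless path in G, and every edge of G is incident to at least one vertex of this path, so the sum of the degrees of the path's vertices is at least r², while the total number of vertices is 3r − 1. -/

import Mathlib

open SimpleGraph

variable {V : Type*}

/-- `l` is a (simple) path in `G`, given as its list of vertices. -/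
def IsPathL (G : SimpleGraph V) (l : List V) : Prop :=
  l.Chain' G.Adj ∧ l.Nodup

/-- `l` is an `s`-`t` path in `G`. -/
def IsStPathL (G : SimpleGraph V) (s t : V) (l : List V) : Prop :=
  IsPathL G l ∧ l.head? = some s ∧ l.getLast? = some t

/-- No two non-consecutive vertices of `l` are adjacent in `G`. -/
def NoChord (G : SimpleGraph V) (l : List V) : Prop :=
  ∀ (i j : ℕ) (hi : i < l.length) (hj : j < l.length), i + 1 < j →
    ¬ G.Adj (l.get ⟨i, hi⟩) (l.get ⟨j, hj⟩)

/-- `l` is a chordless (induced) `s`-`t` path in `G`. -/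
def IsChordlessStPathL (G : SimpleGraph V) (s t : V) (l : List V) : Prop :=
  IsStPathL G s t l ∧ NoChord G l

/-- Vertex set of the Figure 1 graph: `V₁ = Fin r` (the `xᵢ`), `V₂ = Fin r`, and the
`r - 1` connector vertices `pᵢ`. -/
abbrev FigV (r : ℕ) := Fin r ⊕ Fin r ⊕ Fin (r - 1)

/-- The Figure 1 graph: complete bipartite between `V₁` and `V₂`, and `p_k` joined to
`x_k` and `x_{k+1}`. -/
def figG (r : ℕ) : SimpleGraph (FigV r) :=
  SimpleGraph.fromRel fun a b =>
    match a, b with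
    | Sum.inl _, Sum.inr (Sum.inl _) => True
    | Sum.inl i, Sum.inr (Sum.inr k) => (i : ℕ) = (k : ℕ) ∨ (i : ℕ) = (k : ℕ) + 1
    | _, _ => False

/-- The path `x₁ p₁ x₂ p₂ … x_{r-1} p_{r-1} x_r` in the Figure 1 graph. -/
def figPath (r : ℕ) (hr : 2 ≤ r) : List (FigV r) :=
  (List.range (2 * r - 1)).map fun n =>
    if n % 2 = 0 then Sum.inl ⟨n / 2 % r, Nat.mod_lt _ (by omega)⟩
    else Sum.inr (Sum.inr ⟨n / 2 % (r - 1), Nat.mod_lt _ (by omega)⟩)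


section Aux

lemma figG_adj_inl_inl (r : ℕ) (i j : Fin r) : ¬ (figG r).Adj (Sum.inl i) (Sum.inl j) := by
  simp [figG, SimpleGraph.fromRel_adj]

lemma figG_adj_inr_inr (r : ℕ) (a b : Fin r ⊕ Fin (r - 1)) :
    ¬ (figG r).Adj (Sum.inr a) (Sum.inr b) := by
  cases a <;> cases b <;> simp [figG, SimpleGraph.fromRel_adj]

lemma figG_adj_inl_inrr (r : ℕ) (i : Fin r) (k : Fin (r - 1)) :
    (figG r).Adj (Sum.inl i) (Sum.inr (Sum.inr k)) ↔ (i : ℕ) = k ∨ (i : ℕ) = (k : ℕ) + 1 := by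
  simp [figG, SimpleGraph.fromRel_adj]

lemma figG_adj_inrr_inl (r : ℕ) (i : Fin r) (k : Fin (r - 1)) :
    (figG r).Adj (Sum.inr (Sum.inr k)) (Sum.inl i) ↔ (i : ℕ) = k ∨ (i : ℕ) = (k : ℕ) + 1 := by
  rw [SimpleGraph.adj_comm]; exact figG_adj_inl_inrr r i k

lemma figG_adj_inl_inrl (r : ℕ) (i : Fin r) (j : Fin r) :
    (figG r).Adj (Sum.inl i) (Sum.inr (Sum.inl j)) := by
  simp [figG, SimpleGraph.fromRel_adj]

lemma figPath_length (r : ℕ) (hr : 2 ≤ r) : (figPath r hr).length = 2 * r - 1 := by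
  simp [figPath]

lemma figPath_getElem (r : ℕ) (hr : 2 ≤ r) (n : ℕ) (h : n < 2 * r - 1) :
    (figPath r hr)[n]'(by rw [figPath_length]; omega) =
      if hn : n % 2 = 0 then Sum.inl ⟨n / 2, by omega⟩
      else Sum.inr (Sum.inr ⟨n / 2, by omega⟩) := by
  simp only [figPath, List.getElem_map, List.getElem_range]
  split_ifs with h1
  · exact congrArg _ (Fin.ext (Nat.mod_eq_of_lt (by omega)))
  · exact congrArg _ (congrArg _ (Fin.ext (Nat.mod_eq_of_lt (by omega))))

lemma inl_mem_figPath (r : ℕ) (hr : 2 ≤ r) (i : Fin r) :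
    Sum.inl i ∈ figPath r hr := by
  simp only [figPath, List.mem_map, List.mem_range]
  refine ⟨2 * i, by omega, ?_⟩
  rw [if_pos (Nat.mul_mod_right 2 i)]
  exact congrArg _ (Fin.ext (by
    simp only
    rw [Nat.mul_div_cancel_left _ (by norm_num : 0 < 2), Nat.mod_eq_of_lt i.isLt]))

lemma deg_ge (r : ℕ) (i : Fin r) :
    r ≤ ((figG r).neighborSet (Sum.inl i)).ncard := by
  have hsub : (↑(Finset.univ.image fun j : Fin r => (Sum.inr (Sum.inl j) : FigV r)) : Set (FigV r))
      ⊆ (figG r).neighborSet (Sum.inl i) := by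
    intro v hv
    simp only [Finset.coe_image, Finset.coe_univ, Set.image_univ, Set.mem_range] at hv
    obtain ⟨j, rfl⟩ := hv
    exact figG_adj_inl_inrl r i j
  have := Set.ncard_le_ncard hsub (Set.toFinite _)
  rwa [Set.ncard_coe_finset, Finset.card_image_of_injective _
    (fun a b hab => by simpa using hab), Finset.card_univ, Fintype.card_fin] at this

end Aux

/-- The path `x₁ p₁ x₂ … p_{r-1} x_r` is chordless in the Figure 1 graph, every edge of the
graph is incident to a vertex of this path, the sum of the degrees of its vertices is at
least `r²`, and the graph has `3r - 1` vertices. -/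
theorem stmt18 (r : ℕ) (hr : 2 ≤ r) :
    (IsPathL (figG r) (figPath r hr) ∧ NoChord (figG r) (figPath r hr)) ∧
    (∀ e ∈ (figG r).edgeSet, ∃ v, v ∈ figPath r hr ∧ v ∈ e) ∧
    (r ^ 2 ≤ ∑ v ∈ (figPath r hr).toFinset, ((figG r).neighborSet v).ncard) ∧
    Fintype.card (FigV r) = 3 * r - 1 := by
  have hlen : (figPath r hr).length = 2 * r - 1 := figPath_length r hr
  refine ⟨⟨⟨?_, ?_⟩, ?_⟩, ?_, ?_, ?_⟩
  · -- Chain'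
    rw [show List.Chain' (figG r).Adj (figPath r hr) ↔ _ from List.isChain_iff_getElem]
    intro n h
    rw [hlen] at h
    rw [figPath_getElem r hr n (by omega), figPath_getElem r hr (n+1) (by omega)]
    by_cases h1 : n % 2 = 0
    · rw [dif_pos h1, dif_neg (by omega)]
      rw [figG_adj_inl_inrr]
      show n / 2 = (n + 1) / 2 ∨ n / 2 = (n + 1) / 2 + 1
      omega
    · rw [dif_neg h1, dif_pos (by omega)]
      rw [figG_adj_inrr_inl]
      show (n + 1) / 2 = n / 2 ∨ (n + 1) / 2 = n / 2 + 1
      omega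
  · -- Nodup
    refine List.Nodup.map_on ?_ List.nodup_range
    intro x hx y hy h
    rw [List.mem_range] at hx hy
    split_ifs at h with h1 h2 h2 <;>
      simp only [Sum.inl.injEq, Sum.inr.injEq, Fin.mk.injEq, reduceCtorEq] at h <;>
    first
    | (rw [Nat.mod_eq_of_lt (show x / 2 < r by omega),
          Nat.mod_eq_of_lt (show y / 2 < r by omega)] at h; omega)
    | (rw [Nat.mod_eq_of_lt (show x / 2 < r - 1 by omega),
          Nat.mod_eq_of_lt (show y / 2 < r - 1 by omega)] at h; omega)
  · -- NoChord
    intro i j hi hj hij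
    rw [hlen] at hi hj
    simp only [List.get_eq_getElem]
    rw [figPath_getElem r hr i (by omega), figPath_getElem r hr j (by omega)]
    by_cases h1 : i % 2 = 0 <;> by_cases h2 : j % 2 = 0
    · rw [dif_pos h1, dif_pos h2]
      exact figG_adj_inl_inl r _ _
    · rw [dif_pos h1, dif_neg h2, figG_adj_inl_inrr]
      show ¬(i / 2 = j / 2 ∨ i / 2 = j / 2 + 1)
      omega
    · rw [dif_neg h1, dif_pos h2, figG_adj_inrr_inl]
      show ¬(j / 2 = i / 2 ∨ j / 2 = i / 2 + 1)
      omega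
    · rw [dif_neg h1, dif_neg h2]
      exact figG_adj_inr_inr r _ _
  · -- edges incident to path
    intro e he
    induction e with
    | _ a b =>
      rw [SimpleGraph.mem_edgeSet] at he
      match a, b with
      | Sum.inl i, b => exact ⟨Sum.inl i, inl_mem_figPath r hr i, by simp⟩
      | Sum.inr a', Sum.inl i => exact ⟨Sum.inl i, inl_mem_figPath r hr i, by simp⟩
      | Sum.inr a', Sum.inr b' => exact absurd he (figG_adj_inr_inr r a' b')
  · -- degree sum
    have hsub : Finset.univ.image (Sum.inl : Fin r → FigV r) ⊆ (figPath r hr).toFinset := by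
      intro v hv
      simp only [Finset.mem_image, Finset.mem_univ, true_and] at hv
      obtain ⟨i, rfl⟩ := hv
      rw [List.mem_toFinset]
      exact inl_mem_figPath r hr i
    calc r ^ 2 = ∑ _i : Fin r, r := by simp [sq, mul_comm]
    _ ≤ ∑ i : Fin r, ((figG r).neighborSet (Sum.inl i)).ncard :=
        Finset.sum_le_sum fun i _ => deg_ge r i
    _ = ∑ v ∈ Finset.univ.image (Sum.inl : Fin r → FigV r),
          ((figG r).neighborSet v).ncard := by
        rw [Finset.sum_image (f := fun v => ((figG r).neighborSet v).ncard)
          (g := (Sum.inl : Fin r → FigV r)) (fun a _ b _ hab => by simpa using hab)]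
    _ ≤ ∑ v ∈ (figPath r hr).toFinset, ((figG r).neighborSet v).ncard :=
        Finset.sum_le_sum_of_subset hsub
  · -- card
    simp only [FigV, Fintype.card_sum, Fintype.card_fin]
    omega
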